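/- (Theorem 1, TWO-NN, probabilistic core.) Let d > 0 and ρ > 0 be real numbers and ω > 0. Let v₁ and v₂ be independent random variables, each following the Exponential(ρ) distribution, and define the nearest-neighbor distances r₁ = (v₁/ω)^{1/d} and r₂ = ((v₁+v₂)/ω)^{1/d}. Then the ratio μ = r₂/r₁ = (v₂/v₁ + 1)^{1/d} follows the Pareto(1, d) distribution. -/

import Mathlib

open MeasureTheory ProbabilityTheory Real
open Set

lemma aux_exp_int {b : ℝ} (hb : 0 < b) : ∫ x in Ioi (0:ℝ), Real.exp (-(b * x)) = b⁻¹ := by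
  have := integral_comp_mul_left_Ioi (fun x => Real.exp (-x)) 0 hb
  simp only [mul_zero, integral_exp_neg_Ioi, neg_zero, Real.exp_zero, smul_eq_mul, mul_one] at this
  simpa using this

lemma aux_expMeasure_eq (ρ : ℝ) :
    expMeasure ρ = MeasureTheory.volume.withDensity (exponentialPDF ρ) := rfl

lemma aux_exp_Iic_zero (ρ : ℝ) : expMeasure ρ (Iic 0) = 0 := by
  rw [aux_expMeasure_eq, withDensity_apply _ measurableSet_Iic,
    ← setLIntegral_congr (Iio_ae_eq_Iic (a := (0:ℝ))),
    lintegral_exponentialPDF_of_nonpos le_rfl]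

lemma aux_exp_ae_pos (ρ : ℝ) : ∀ᵐ a ∂(expMeasure ρ), 0 < a := by
  rw [ae_iff]
  have : {a : ℝ | ¬ 0 < a} = Iic 0 := by ext a; simp
  rw [this]; exact aux_exp_Iic_zero ρ

lemma aux_exp_Iic {ρ : ℝ} (hρ : 0 < ρ) {y : ℝ} (hy : 0 ≤ y) :
    expMeasure ρ (Iic y) = ENNReal.ofReal (1 - Real.exp (-(ρ * y))) := by
  have : IsProbabilityMeasure (expMeasure ρ) := isProbabilityMeasure_expMeasure hρ
  rw [← ofReal_cdf (expMeasure ρ) y]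
  rw [cdf_expMeasure_eq hρ, if_pos hy]

lemma aux_main_lintegral {ρ t : ℝ} (hρ : 0 < ρ) (ht : 0 ≤ t) :
    ∫⁻ a, (exponentialPDF ρ a) * ENNReal.ofReal (1 - Real.exp (-(ρ * (t * a)))) ∂volume
      = ENNReal.ofReal (t / (1 + t)) := by
  have h1t : 0 < 1 + t := by linarith
  have hb : 0 < ρ * (1 + t) := by positivity
  -- split the line
  rw [← lintegral_add_compl _ (measurableSet_Ioi (a := (0:ℝ)))]
  have hIic : ∫⁻ a in (Ioi (0:ℝ))ᶜ, (exponentialPDF ρ a) * ENNReal.ofReal (1 - Real.exp (-(ρ * (t * a)))) ∂volume = 0 := by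
    rw [compl_Ioi, ← setLIntegral_congr (Iio_ae_eq_Iic (a := (0:ℝ)))]
    rw [setLIntegral_congr_fun measurableSet_Iio (fun a (ha : a < 0) => by
      rw [exponentialPDF_of_neg ha, zero_mul])]
    simp
  rw [hIic, add_zero]
  -- rewrite integrand on Ioi 0
  have hcong : ∫⁻ a in Ioi (0:ℝ), (exponentialPDF ρ a) * ENNReal.ofReal (1 - Real.exp (-(ρ * (t * a)))) ∂volume
      = ∫⁻ a in Ioi (0:ℝ), ENNReal.ofReal (ρ * Real.exp (-(ρ * a)) - ρ * Real.exp (-((ρ * (1 + t)) * a))) ∂volume := by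
    refine setLIntegral_congr_fun measurableSet_Ioi (fun a (ha : 0 < a) => ?_)
    rw [exponentialPDF_of_nonneg ha.le, ← ENNReal.ofReal_mul (by positivity)]
    congr 1
    have harg : -(ρ * a) + -(ρ * (t * a)) = -((ρ * (1 + t)) * a) := by ring
    rw [mul_sub, mul_one, mul_assoc, ← Real.exp_add, harg]
  rw [hcong]
  -- to a real integral
  have hint1 : IntegrableOn (fun a => ρ * Real.exp (-(ρ * a))) (Ioi (0:ℝ)) := by
    simpa [neg_mul, IntegrableOn] using (exp_neg_integrableOn_Ioi 0 hρ).const_mul ρ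
  have hint2 : IntegrableOn (fun a => ρ * Real.exp (-((ρ * (1 + t)) * a))) (Ioi (0:ℝ)) := by
    simpa [neg_mul, IntegrableOn] using (exp_neg_integrableOn_Ioi 0 hb).const_mul ρ
  have hint : IntegrableOn (fun a => ρ * Real.exp (-(ρ * a)) - ρ * Real.exp (-((ρ * (1 + t)) * a))) (Ioi (0:ℝ)) := hint1.sub hint2
  have hnonneg : 0 ≤ᵐ[volume.restrict (Ioi (0:ℝ))]
      fun a => ρ * Real.exp (-(ρ * a)) - ρ * Real.exp (-((ρ * (1 + t)) * a)) := by
    refine (ae_restrict_iff' measurableSet_Ioi).2 (ae_of_all _ (fun a (ha : 0 < a) => ?_))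
    have hle : Real.exp (-((ρ * (1 + t)) * a)) ≤ Real.exp (-(ρ * a)) :=
      Real.exp_le_exp.2 (by nlinarith [mul_nonneg (mul_nonneg hρ.le ht) ha.le])
    have h2 := mul_le_mul_of_nonneg_left hle hρ.le
    show (0:ℝ) ≤ ρ * Real.exp (-(ρ * a)) - ρ * Real.exp (-((ρ * (1 + t)) * a))
    linarith
  rw [← ofReal_integral_eq_lintegral_ofReal hint hnonneg]
  congr 1
  rw [integral_sub hint1 hint2, integral_const_mul, integral_const_mul, aux_exp_int hρ,
    aux_exp_int hb]
  field_simp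
  ring

lemma aux_pareto_Iic_of_lt {d x : ℝ} (hx : x < 1) : paretoMeasure 1 d (Iic x) = 0 := by
  have h : paretoMeasure 1 d (Iic x) ≤ paretoMeasure 1 d (Iio 1) :=
    measure_mono (fun y hy => lt_of_le_of_lt hy hx)
  have h0 : paretoMeasure 1 d (Iio 1) = 0 := by
    rw [paretoMeasure, withDensity_apply _ measurableSet_Iio, lintegral_paretoPDF_of_le le_rfl]
  exact le_antisymm (h.trans h0.le) zero_le

lemma aux_pareto_Iic {d x : ℝ} (hd : 0 < d) (hx : 1 ≤ x) :
    paretoMeasure 1 d (Iic x) = ENNReal.ofReal (1 - x ^ (-d)) := by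
  have hx0 : (0:ℝ) < x := lt_of_lt_of_le one_pos hx
  rw [paretoMeasure, withDensity_apply _ measurableSet_Iic]
  have hsplit : Iic x = Iio 1 ∪ Icc 1 x := by
    ext y; simp only [mem_Iic, mem_union, mem_Iio, mem_Icc]
    constructor
    · intro hy; rcases lt_or_ge y 1 with h | h
      · exact Or.inl h
      · exact Or.inr ⟨h, hy⟩
    · rintro (h | ⟨_, h⟩)
      · linarith
      · exact h
  rw [hsplit, lintegral_union measurableSet_Icc (by
    rw [Set.disjoint_left]; intro y hy1 hy2; exact absurd hy2.1 (not_le.2 hy1)),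
    lintegral_paretoPDF_of_le le_rfl, zero_add]
  have hcong : ∫⁻ y in Icc 1 x, paretoPDF 1 d y
      = ∫⁻ y in Icc 1 x, ENNReal.ofReal (d * y ^ (-(d+1))) := by
    refine setLIntegral_congr_fun measurableSet_Icc (fun y hy => ?_)
    rw [paretoPDF_of_le hy.1, Real.one_rpow, mul_one]
  rw [hcong]
  have hcont : IntegrableOn (fun y => d * y ^ (-(d+1))) (Icc 1 x) := by
    apply ContinuousOn.integrableOn_compact isCompact_Icc
    refine ContinuousOn.mul continuousOn_const ?_
    intro y hy
    exact ((Real.continuousAt_rpow_const y _ (Or.inl (by linarith [hy.1]))).continuousWithinAt)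
  have hnn : 0 ≤ᵐ[volume.restrict (Icc 1 x)] fun y => d * y ^ (-(d+1)) := by
    refine (ae_restrict_iff' measurableSet_Icc).2 (ae_of_all _ (fun y hy => ?_))
    have : (0:ℝ) < y := by linarith [hy.1]
    positivity
  rw [← ofReal_integral_eq_lintegral_ofReal hcont hnn]
  congr 1
  rw [integral_Icc_eq_integral_Ioc, ← intervalIntegral.integral_of_le hx, intervalIntegral.integral_const_mul,
    integral_rpow (Or.inr ⟨by intro h; apply hd.ne'; linarith, by
      rw [Set.uIcc_of_le hx]; intro h; linarith [h.1]⟩)]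
  have : -(d+1) + 1 = -d := by ring
  rw [this, Real.one_rpow]
  have hdne : d ≠ 0 := hd.ne'
  rw [mul_div_assoc', div_eq_iff (neg_ne_zero.mpr hdne)]
  ring

lemma aux_lint_exp {ρ t : ℝ} (hρ : 0 < ρ) (ht : 0 ≤ t) :
    ∫⁻ a, ENNReal.ofReal (1 - Real.exp (-(ρ * (t * a)))) ∂(expMeasure ρ)
      = ENNReal.ofReal (t / (1 + t)) := by
  have hpdf : Measurable (exponentialPDF ρ) := (measurable_exponentialPDFReal ρ).ennreal_ofReal
  have hF : Measurable (fun a : ℝ => ENNReal.ofReal (1 - Real.exp (-(ρ * (t * a))))) := by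
    fun_prop
  have he : expMeasure ρ = MeasureTheory.volume.withDensity (exponentialPDF ρ) := rfl
  rw [he, lintegral_withDensity_eq_lintegral_mul _ hpdf hF]
  exact aux_main_lintegral hρ ht

lemma aux_map_pareto {d ρ : ℝ} (hd : 0 < d) (hρ : 0 < ρ) :
    Measure.map (fun p : ℝ × ℝ => (p.2 / p.1 + 1) ^ (1 / d))
      ((expMeasure ρ).prod (expMeasure ρ)) = paretoMeasure 1 d := by
  haveI : IsProbabilityMeasure (expMeasure ρ) := isProbabilityMeasure_expMeasure hρ
  haveI : IsProbabilityMeasure (paretoMeasure 1 d) := isProbabilityMeasure_paretoMeasure one_pos hd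
  have hg : Measurable (fun p : ℝ × ℝ => (p.2 / p.1 + 1) ^ (1 / d)) :=
    ((measurable_snd.div measurable_fst).add_const 1).pow_const _
  haveI : IsProbabilityMeasure (Measure.map (fun p : ℝ × ℝ => (p.2 / p.1 + 1) ^ (1 / d))
      ((expMeasure ρ).prod (expMeasure ρ))) := Measure.isProbabilityMeasure_map hg.aemeasurable
  refine Measure.ext_of_Iic _ _ (fun x => ?_)
  rw [Measure.map_apply hg measurableSet_Iic, Measure.prod_apply (hg measurableSet_Iic)]
  by_cases hx : 1 ≤ x
  · have hx0 : (0:ℝ) < x := lt_of_lt_of_le one_pos hx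
    set t := x ^ d - 1 with hptdef
    have ht : 0 ≤ t := by
      have := Real.one_le_rpow hx hd.le
      simp only [hptdef]; linarith
    have h1t : 1 + t = x ^ d := by simp [hptdef]
    have hxd : (0:ℝ) < x ^ d := Real.rpow_pos_of_pos hx0 d
    have inner : ∀ᵐ a ∂(expMeasure ρ),
        (expMeasure ρ) (Prod.mk a ⁻¹' ((fun p : ℝ × ℝ => (p.2 / p.1 + 1) ^ (1 / d)) ⁻¹' Iic x))
          = ENNReal.ofReal (1 - Real.exp (-(ρ * (t * a)))) := by
      filter_upwards [aux_exp_ae_pos ρ] with a ha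
      have hseq : (Prod.mk a ⁻¹' ((fun p : ℝ × ℝ => (p.2 / p.1 + 1) ^ (1 / d)) ⁻¹' Iic x))
          =ᵐ[expMeasure ρ] Iic (t * a) := by
        refine Filter.eventuallyEq_set.mpr ?_
        filter_upwards [aux_exp_ae_pos ρ] with b hb
        simp only [mem_preimage, mem_Iic]
        have h1 : (0:ℝ) ≤ b / a + 1 := by positivity
        rw [one_div, Real.rpow_inv_le_iff_of_pos h1 hx0.le hd]
        constructor
        · intro h
          have : b / a ≤ t := by simp only [hptdef]; linarith
          calc b = (b / a) * a := by field_simp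
          _ ≤ t * a := mul_le_mul_of_nonneg_right this ha.le
        · intro h
          have : b / a ≤ t := by rw [div_le_iff₀ ha]; exact h
          simp only [hptdef] at this; linarith
      rw [measure_congr hseq, aux_exp_Iic hρ (mul_nonneg ht ha.le)]
    rw [lintegral_congr_ae inner, aux_lint_exp hρ ht, aux_pareto_Iic hd hx]
    congr 1
    rw [Real.rpow_neg hx0.le, ← h1t]
    have : (0:ℝ) < 1 + t := by linarith
    field_simp
    ring
  · push_neg at hx
    rw [aux_pareto_Iic_of_lt hx]
    have hIio : (expMeasure ρ) (Iio 0) = 0 :=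
      le_antisymm (le_trans (measure_mono Iio_subset_Iic_self) (aux_exp_Iic_zero ρ).le) zero_le
    have inner : ∀ᵐ a ∂(expMeasure ρ),
        (expMeasure ρ) (Prod.mk a ⁻¹' ((fun p : ℝ × ℝ => (p.2 / p.1 + 1) ^ (1 / d)) ⁻¹' Iic x))
          = 0 := by
      filter_upwards [aux_exp_ae_pos ρ] with a ha
      refine measure_mono_null (fun b hb => ?_) hIio
      simp only [mem_preimage, mem_Iic] at hb
      by_contra hb0
      simp only [mem_Iio, not_lt] at hb0
      have h1 : (1:ℝ) ≤ b / a + 1 := by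
        have : 0 ≤ b / a := div_nonneg hb0 ha.le
        linarith
      have := Real.one_le_rpow h1 (by positivity : (0:ℝ) ≤ 1 / d)
      linarith
    rw [lintegral_congr_ae inner]
    simp

/-- **Theorem 1 (TWO-NN), probabilistic core.**
Let `d > 0`, `ρ > 0`, `w > 0` (the volume of the `d`-dimensional unit ball). If `v₁, v₂` are
independent `Exponential(ρ)` random variables and `r₁ = (v₁ / w) ^ (1/d)`,
`r₂ = ((v₁ + v₂) / w) ^ (1/d)` are the first two nearest-neighbor distances, then the ratio
`μ = r₂ / r₁ = (v₂ / v₁ + 1) ^ (1/d)` follows the `Pareto(1, d)` distribution. -/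
theorem twoNN_ratio_pareto
    {Ω : Type*} [MeasurableSpace Ω] (P : Measure Ω) [IsProbabilityMeasure P]
    (d ρ w : ℝ) (hd : 0 < d) (hρ : 0 < ρ) (hw : 0 < w)
    (v₁ v₂ : Ω → ℝ) (hv₁meas : Measurable v₁) (hv₂meas : Measurable v₂)
    (hv₁ : Measure.map v₁ P = expMeasure ρ)
    (hv₂ : Measure.map v₂ P = expMeasure ρ)
    (hindep : IndepFun v₁ v₂ P)
    (r₁ r₂ : Ω → ℝ)
    (hr₁ : ∀ ω, r₁ ω = (v₁ ω / w) ^ (1 / d))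
    (hr₂ : ∀ ω, r₂ ω = ((v₁ ω + v₂ ω) / w) ^ (1 / d)) :
    Measure.map (fun ω => r₂ ω / r₁ ω) P = paretoMeasure 1 d ∧
    Measure.map (fun ω => (v₂ ω / v₁ ω + 1) ^ (1 / d)) P = paretoMeasure 1 d := by
  have hg : Measurable (fun p : ℝ × ℝ => (p.2 / p.1 + 1) ^ (1 / d)) :=
    ((measurable_snd.div measurable_fst).add_const 1).pow_const _
  have hpair : Measurable (fun ω => (v₁ ω, v₂ ω)) := hv₁meas.prodMk hv₂meas
  have hjoint : P.map (fun ω => (v₁ ω, v₂ ω)) = (expMeasure ρ).prod (expMeasure ρ) := by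
    have h := (indepFun_iff_map_prod_eq_prod_map_map hv₁meas.aemeasurable
      hv₂meas.aemeasurable).mp hindep
    rw [hv₁, hv₂] at h
    exact h
  have h2 : Measure.map (fun ω => (v₂ ω / v₁ ω + 1) ^ (1 / d)) P = paretoMeasure 1 d := by
    have hco : (fun ω => (v₂ ω / v₁ ω + 1) ^ (1 / d))
        = (fun p : ℝ × ℝ => (p.2 / p.1 + 1) ^ (1 / d)) ∘ (fun ω => (v₁ ω, v₂ ω)) := rfl
    rw [hco, ← Measure.map_map hg hpair, hjoint, aux_map_pareto hd hρ]
  have haepos : ∀ (v : Ω → ℝ), Measurable v → Measure.map v P = expMeasure ρ →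
      ∀ᵐ ω ∂P, 0 < v ω := by
    intro v hm hmap
    rw [ae_iff]
    have hset : {ω | ¬ 0 < v ω} = v ⁻¹' (Iic 0) := by ext ω; simp
    rw [hset, ← Measure.map_apply hm measurableSet_Iic, hmap, aux_exp_Iic_zero]
  have hae : (fun ω => r₂ ω / r₁ ω) =ᵐ[P] fun ω => (v₂ ω / v₁ ω + 1) ^ (1 / d) := by
    filter_upwards [haepos v₁ hv₁meas hv₁, haepos v₂ hv₂meas hv₂] with ω h1 h2
    have hw' : w ≠ 0 := hw.ne'
    have h1' : v₁ ω ≠ 0 := h1.ne'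
    rw [hr₁, hr₂, ← Real.div_rpow (by positivity) (by positivity)]
    congr 1
    field_simp
    ring
  exact ⟨(Measure.map_congr hae).trans h2, h2⟩
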